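/- Let M, l be natural numbers with l > 1 and let α, β : ℕ → ℕ. Then either there exist indices n₁ < n₂ < ... < n_l such that α(n₁) = ... = α(n_l) < M or β(n₁) = ... = β(n_l) < M, or there exist n, m ∈ ℕ such that M ≤ α(n) ≤ β(m) or M ≤ β(n) ≤ α(m). -/

import Mathlib

lemma aux_pigeon (M l : ℕ) (α : ℕ → ℕ) (h : ∀ n, α n < M) :
    ∃ g : Fin l → ℕ, StrictMono g ∧ ∃ c, c < M ∧ ∀ s : Fin l, α (g s) = c := by
  have hM : 0 < M := lt_of_le_of_lt (Nat.zero_le _) (h 0)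
  set α' : ℕ → Fin M := fun n => ⟨α n, h n⟩ with hα'
  obtain ⟨c, hc⟩ := Finite.exists_infinite_fiber α'
  have hinf : (setOf fun n => α n = (c : ℕ)).Infinite := by
    rw [← Set.infinite_coe_iff]
    have : (α' ⁻¹' {c}) = setOf fun n => α n = (c : ℕ) := by
      ext n
      simp [hα', Fin.ext_iff]; exact Iff.rfl
    rwa [← this]
  refine ⟨fun s => Nat.nth (fun n => α n = (c : ℕ)) s, ?_, (c : ℕ), c.isLt, ?_⟩
  · intro a b hab
    exact Nat.nth_strictMono hinf (by exact_mod_cast hab)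
  · intro s
    exact Nat.nth_mem_of_infinite hinf s

theorem disjunction_lemma (M l : ℕ) (hl : 1 < l) (α β : ℕ → ℕ) :
    (∃ g : Fin l → ℕ, StrictMono g ∧
      ((∃ c, c < M ∧ ∀ s : Fin l, α (g s) = c) ∨
       (∃ c, c < M ∧ ∀ s : Fin l, β (g s) = c))) ∨
    (∃ n m : ℕ, (M ≤ α n ∧ α n ≤ β m) ∨ (M ≤ β n ∧ β n ≤ α m)) := by
  by_cases h1 : ∀ n, α n < M
  · obtain ⟨g, hg, c, hc, hgc⟩ := aux_pigeon M l α h1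
    exact Or.inl ⟨g, hg, Or.inl ⟨c, hc, hgc⟩⟩
  by_cases h2 : ∀ n, β n < M
  · obtain ⟨g, hg, c, hc, hgc⟩ := aux_pigeon M l β h2
    exact Or.inl ⟨g, hg, Or.inr ⟨c, hc, hgc⟩⟩
  push_neg at h1 h2
  obtain ⟨n, hn⟩ := h1
  obtain ⟨m, hm⟩ := h2
  rcases le_total (α n) (β m) with h | h
  · exact Or.inr ⟨n, m, Or.inl ⟨hn, h⟩⟩
  · exact Or.inr ⟨m, n, Or.inr ⟨hm, h⟩⟩
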